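/- Every countable tree T that has only finitely many subtrees up to isomorphism is isomorphic (as a partial order) to the prefix order (L; ≤_pref) for some regular language L ⊆ Σ* over a finite alphabet Σ with ε ∈ L. -/

import Mathlib

open scoped Classical
set_option linter.unusedVariables false

namespace RTree

variable {A : Type*} [PartialOrder A]

/-- The setoid identifying points with order-isomorphic up-sets. -/
def treeSetoid (A : Type*) [PartialOrder A] : Setoid A where
  r a b := Nonempty ({x : A // a ≤ x} ≃o {x : A // b ≤ x})
  iseqv := ⟨fun _ => ⟨OrderIso.refl _⟩, fun ⟨e⟩ => ⟨e.symm⟩, fun ⟨e⟩ ⟨f⟩ => ⟨e.trans f⟩⟩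

abbrev TQ (A : Type*) [PartialOrder A] := Quotient (treeSetoid A)

def cls (a : A) : TQ A := Quotient.mk (treeSetoid A) a

lemma cls_eq_of_iso {a b : A} (e : {x : A // a ≤ x} ≃o {x : A // b ≤ x}) : cls a = cls b :=
  Quotient.sound ⟨e⟩

/-- A bundled setup for the construction. -/
structure Setup (A : Type*) [PartialOrder A] where
  hfin : ∀ a : A, (Set.Iic a).Finite
  hchain : ∀ a : A, IsChain (· ≤ ·) (Set.Iic a)
  r : A
  hr : ∀ a : A, r ≤ a
  ι : A → ℕ
  hι : Function.Injective ι
  hQ : Finite (TQ A)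

namespace Setup

variable (S : Setup A)

lemma exists_parent {a : A} (ha : a ≠ S.r) : ∃ m, m < a ∧ ∀ b < a, b ≤ m := by
  have hne : (Set.Iic a \ {a}).Nonempty := ⟨S.r, ⟨S.hr a, fun h => ha ((h : S.r = a)).symm⟩⟩
  have hfin : (Set.Iic a \ {a}).Finite := (S.hfin a).subset Set.diff_subset
  obtain ⟨m, hm, hmax⟩ : ∃ m ∈ Set.Iic a \ {a}, ∀ b ∈ Set.Iic a \ {a}, m ≤ b → m = b := by
    obtain ⟨m, hm⟩ := hfin.exists_maximal hne
    exact ⟨m, hm.1, fun b hb h => le_antisymm h (hm.2 hb h)⟩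
  refine ⟨m, lt_of_le_of_ne hm.1 hm.2, fun b hb => ?_⟩
  have hb' : b ∈ Set.Iic a \ {a} := ⟨hb.le, fun h => absurd h (by simpa using hb.ne)⟩
  rcases eq_or_ne b m with h | h
  · exact h.le
  · rcases S.hchain a hb'.1 hm.1 h with h' | h'
    · exact h'
    · exact (hmax b hb' h').ge

noncomputable def parent (a : A) : A :=
  if h : ∃ m, m < a ∧ ∀ b < a, b ≤ m then h.choose else S.r

lemma parent_lt {a : A} (ha : a ≠ S.r) : S.parent a < a := by
  have h := S.exists_parent ha
  rw [parent, dif_pos h]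
  exact h.choose_spec.1

lemma le_parent {a b : A} (ha : a ≠ S.r) (hb : b < a) : b ≤ S.parent a := by
  have h := S.exists_parent ha
  rw [parent, dif_pos h]
  exact h.choose_spec.2 b hb

lemma parent_le {a : A} : S.parent a ≤ a := by
  rcases eq_or_ne a S.r with h | h
  · subst h; rw [parent]; split
    · next hh => exact hh.choose_spec.1.le
    · exact le_rfl
  · exact (S.parent_lt h).le

lemma parent_covBy {a : A} (ha : a ≠ S.r) : S.parent a ⋖ a :=
  ⟨S.parent_lt ha, fun _ h1 h2 => ((S.le_parent ha h2).trans_lt h1).false⟩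

lemma parent_eq_of_covBy {a c : A} (h : a ⋖ c) : S.parent c = a ∧ c ≠ S.r := by
  have hc : c ≠ S.r := by
    intro hh
    subst hh
    exact (h.lt.trans_le (S.hr a)).false
  refine ⟨le_antisymm ?_ (S.le_parent hc h.lt), hc⟩
  by_contra hh
  have h1 : a ≤ S.parent c := S.le_parent hc h.lt
  exact h.2 (lt_of_le_not_ge h1 hh) (S.parent_lt hc)

noncomputable def dep (a : A) : ℕ := (S.hfin a).toFinset.card

lemma dep_parent_lt {a : A} (ha : a ≠ S.r) : S.dep (S.parent a) < S.dep a := by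
  apply Finset.card_lt_card
  rw [Finset.ssubset_iff_of_subset]
  · exact ⟨a, by simp, by simpa using (S.parent_lt ha).not_ge⟩
  · intro x hx
    simp only [Set.Finite.mem_toFinset, Set.mem_Iic] at hx ⊢
    exact hx.trans S.parent_le

lemma le_iff_le_parent {a b : A} (ha : a ≠ S.r) (hb : b ≤ a) : b = a ∨ b ≤ S.parent a := by
  rcases eq_or_ne b a with h | h
  · exact Or.inl h
  · exact Or.inr (S.le_parent ha (lt_of_le_of_ne hb h))


end Setup

section Rank
variable {A : Type*} (ι : A → ℕ) (hι : Function.Injective ι)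

/-- rank of `c` within `C`, via the injection `ι`. -/
noncomputable def rk (C : Set A) (c : A) : ℕ :=
  Nat.count (fun k => ∃ x ∈ C, ι x = k) (ι c)

variable {ι}

lemma rk_setOf_eq (C : Set A) : {k | ∃ x ∈ C, ι x = k} = ι '' C := by
  ext k; simp [Set.mem_image]

include hι in
lemma rk_card_eq {C : Set A} (hC : C.Finite) (hf : {k | ∃ x ∈ C, ι x = k}.Finite) :
    (hf.toFinset.card : ℕ∞) = C.encard := by
  have h1 : {k | ∃ x ∈ C, ι x = k} = ι '' C := rk_setOf_eq C
  have : (hf.toFinset.card : ℕ∞) = (ι '' C).encard := by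
    rw [← Set.Finite.encard_eq_coe_toFinset_card hf, h1]
  rw [this, Set.InjOn.encard_image (hι.injOn)]

include hι in
lemma rk_finite_iff {C : Set A} : {k | ∃ x ∈ C, ι x = k}.Finite ↔ C.Finite := by
  rw [rk_setOf_eq]
  exact ⟨fun h => Set.Finite.of_finite_image h hι.injOn, fun h => h.image ι⟩

include hι in
lemma rk_inj {C : Set A} {c c' : A} (hc : c ∈ C) (hc' : c' ∈ C)
    (h : rk ι C c = rk ι C c') : c = c' := by
  have h1 : (fun k => ∃ x ∈ C, ι x = k) (ι c) := ⟨c, hc, rfl⟩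
  have h2 : (fun k => ∃ x ∈ C, ι x = k) (ι c') := ⟨c', hc', rfl⟩
  exact hι (Nat.count_injective h1 h2 h)

include hι in
lemma rk_lt_encard {C : Set A} {c : A} (hc : c ∈ C) : (rk ι C c : ℕ∞) < C.encard := by
  have h1 : (fun k => ∃ x ∈ C, ι x = k) (ι c) := ⟨c, hc, rfl⟩
  rcases C.finite_or_infinite with hC | hC
  · have hf : {k | ∃ x ∈ C, ι x = k}.Finite := (rk_finite_iff hι).2 hC
    have := Nat.count_lt_card hf h1
    rw [← rk_card_eq hι hC hf]
    exact_mod_cast this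
  · rw [Set.encard_eq_top hC]
    exact ENat.coe_lt_top _
    
include hι in
lemma rk_surj {C : Set A} {i : ℕ} (hi : (i : ℕ∞) < C.encard) : ∃ c ∈ C, rk ι C c = i := by
  set p := fun k => ∃ x ∈ C, ι x = k with hp
  have hcard : ∀ hf : (setOf p).Finite, i < hf.toFinset.card := by
    intro hf
    have hC : C.Finite := (rk_finite_iff hι).1 hf
    have := rk_card_eq hι hC hf
    rw [← this] at hi
    exact_mod_cast hi
  have hmem : p (Nat.nth p i) := Nat.nth_mem i hcard
  obtain ⟨c, hc, hceq⟩ := hmem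
  refine ⟨c, hc, ?_⟩
  have h2 : Nat.count p (Nat.nth p i) = i := Nat.count_nth hcard
  show Nat.count p (ι c) = i
  rw [hceq]
  exact h2

end Rank

section Iso
variable {A : Type*} [PartialOrder A]
def upUp {a c : A} (h : a ≤ c) :
    {x : A // c ≤ x} ≃o {y : {x : A // a ≤ x} // (⟨c, h⟩ : {x : A // a ≤ x}) ≤ y} where
  toFun x := ⟨⟨x.1, h.trans x.2⟩, x.2⟩
  invFun y := ⟨y.1.1, y.2⟩
  left_inv _ := rfl
  right_inv _ := rfl
  map_rel_iff' := Iff.rfl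

def isoCongr {α β : Type*} [Preorder α] [Preorder β] (φ : α ≃o β) (u : α) :
    {y : α // u ≤ y} ≃o {y : β // φ u ≤ y} where
  toFun y := ⟨φ y.1, φ.le_iff_le.2 y.2⟩
  invFun y := ⟨φ.symm y.1, by
    have := φ.symm.le_iff_le.2 y.2
    simpa using this⟩
  left_inv y := by ext; simp
  right_inv y := by ext; simp
  map_rel_iff' := by simp [Subtype.mk_le_mk]

lemma covBy_subtype {a x y : A} (hx : a ≤ x) (hy : a ≤ y) :
    ((⟨x, hx⟩ : {b : A // a ≤ b}) ⋖ ⟨y, hy⟩) ↔ x ⋖ y := by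
  have hcon : (Set.range (OrderEmbedding.subtype fun c : A => a ≤ c)).OrdConnected := by
    rw [show Set.range (OrderEmbedding.subtype fun c : A => a ≤ c) = Set.Ici a from by
      ext x; simp]
    exact Set.ordConnected_Ici
  simpa only [OrderEmbedding.subtype_apply] using
    (Set.OrdConnected.apply_covBy_apply_iff
      (OrderEmbedding.subtype fun c : A => a ≤ c) hcon
        (a := (⟨x, hx⟩ : {b : A // a ≤ b})) (b := (⟨y, hy⟩ : {b : A // a ≤ b}))).symm

lemma iso_bot {a b : A} (φ : {x : A // a ≤ x} ≃o {x : A // b ≤ x}) :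
    φ ⟨a, le_rfl⟩ = ⟨b, le_rfl⟩ := by
  apply le_antisymm
  · have : (⟨a, le_rfl⟩ : {x : A // a ≤ x}) ≤ φ.symm ⟨b, le_rfl⟩ := (φ.symm ⟨b, le_rfl⟩).2
    have := φ.le_iff_le.2 this
    simpa using this
  · exact (φ ⟨a, le_rfl⟩).2

lemma cls_image {a b c : A} (φ : {x : A // a ≤ x} ≃o {x : A // b ≤ x}) (hc : a ≤ c) :
    cls c = cls ((φ ⟨c, hc⟩).1) :=
  cls_eq_of_iso <| ((upUp hc).trans (isoCongr φ ⟨c, hc⟩)).trans (upUp (φ ⟨c, hc⟩).2).symm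

lemma covBy_image {a b c : A} (φ : {x : A // a ≤ x} ≃o {x : A // b ≤ x}) (hc : a ≤ c)
    (h : a ⋖ c) : b ⋖ (φ ⟨c, hc⟩).1 := by
  have h1 : (⟨a, le_rfl⟩ : {x : A // a ≤ x}) ⋖ ⟨c, hc⟩ := (covBy_subtype le_rfl hc).2 h
  have h2 : φ ⟨a, le_rfl⟩ ⋖ φ ⟨c, hc⟩ := (apply_covBy_apply_iff φ).2 h1
  rw [iso_bot φ] at h2
  exact (covBy_subtype le_rfl (φ ⟨c, hc⟩).2).1 h2

def Cset (a : A) (q : TQ A) : Set A := {c | a ⋖ c ∧ cls c = q}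

lemma Cset_encard_congr {a b : A} (h : Nonempty ({x : A // a ≤ x} ≃o {x : A // b ≤ x}))
    (q : TQ A) : (Cset a q).encard = (Cset b q).encard := by
  obtain ⟨φ⟩ := h
  classical
  set f : A → A := fun c => if hc : a ≤ c then (φ ⟨c, hc⟩).1 else c with hf
  have hmem : ∀ c ∈ Cset a q, f c ∈ Cset b q := by
    rintro c ⟨h1, h2⟩
    have hc : a ≤ c := h1.lt.le
    simp only [hf, dif_pos hc]
    exact ⟨covBy_image φ hc h1, (cls_image φ hc).symm.trans h2⟩
  have hinj : Set.InjOn f (Cset a q) := by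
    rintro c ⟨h1, _⟩ c' ⟨h1', _⟩ hcc
    have hc : a ≤ c := h1.lt.le
    have hc' : a ≤ c' := h1'.lt.le
    simp only [hf, dif_pos hc, dif_pos hc'] at hcc
    have : φ ⟨c, hc⟩ = φ ⟨c', hc'⟩ := Subtype.ext hcc
    simpa using φ.injective this
  have himg : f '' Cset a q = Cset b q := by
    apply Set.Subset.antisymm
    · rintro _ ⟨c, hc, rfl⟩; exact hmem c hc
    · rintro c' ⟨h1', h2'⟩
      have hc' : b ≤ c' := h1'.lt.le
      refine ⟨(φ.symm ⟨c', hc'⟩).1, ⟨?_, ?_⟩, ?_⟩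
      · have := covBy_image φ.symm hc' h1'
        simpa using this
      · exact (cls_image φ.symm hc').symm.trans h2'
      · have ha : a ≤ (φ.symm ⟨c', hc'⟩).1 := (φ.symm ⟨c', hc'⟩).2
        simp only [hf, dif_pos ha, Subtype.coe_eta, OrderIso.apply_symm_apply]
  rw [← himg, hinj.encard_image]

end Iso


namespace Setup

variable {A : Type*} [PartialOrder A]

noncomputable def mbar (p q : TQ A) : ℕ∞ :=
  Quotient.lift (fun a => (Cset a q).encard) (fun _ _ h => Cset_encard_congr h q) p

lemma mbar_cls (a : A) (q : TQ A) : mbar (cls a) q = (Cset a q).encard := rfl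

noncomputable def Mb (S : Setup A) : ℕ :=
  sSup (Set.range fun pq : TQ A × TQ A => (mbar pq.1 pq.2).toNat)

variable (S : Setup A)

lemma mbar_le_Mb {p q : TQ A} (h : mbar p q ≠ ⊤) : mbar p q ≤ (S.Mb : ℕ∞) := by
  letI := S.hQ
  have h1 : (mbar p q).toNat ≤ S.Mb := by
    apply le_csSup (Set.Finite.bddAbove (Set.finite_range _))
    exact ⟨(p, q), rfl⟩
  calc mbar p q = ((mbar p q).toNat : ℕ∞) := (ENat.coe_toNat h).symm
    _ ≤ (S.Mb : ℕ∞) := by exact_mod_cast h1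

def Sig (S : Setup A) : Type _ := TQ A × Fin (S.Mb + 3)

noncomputable def ltr (q : TQ A) (j : ℕ) : S.Sig := (q, ⟨min j (S.Mb + 2), by omega⟩)

lemma ltr_fst (q : TQ A) (j : ℕ) : (S.ltr q j).1 = q := rfl

lemma ltr_snd (q : TQ A) {j : ℕ} (hj : j ≤ S.Mb + 2) : ((S.ltr q j).2 : Fin (S.Mb + 3)).val = j := by
  simp [ltr, Nat.min_eq_left hj]

lemma ltr_inj {q q' : TQ A} {j j' : ℕ} (hj : j ≤ S.Mb + 2) (hj' : j' ≤ S.Mb + 2)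
    (h : S.ltr q j = S.ltr q' j') : q = q' ∧ j = j' := by
  have h1 : q = q' := congrArg Prod.fst h
  have h2 := congrArg (fun x : S.Sig => (x.2 : Fin (S.Mb + 3)).val) h
  simp only [ltr, Nat.min_eq_left hj, Nat.min_eq_left hj'] at h2
  exact ⟨h1, h2⟩

def sib (a : A) : Set A := Cset (S.parent a) (cls a)

noncomputable def rnk (a : A) : ℕ := rk S.ι (S.sib a) a

lemma mem_sib {a : A} (ha : a ≠ S.r) : a ∈ S.sib a := ⟨S.parent_covBy ha, rfl⟩

lemma sib_encard (a : A) : (S.sib a).encard = mbar (cls (S.parent a)) (cls a) := rfl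

lemma rnk_lt {a : A} (ha : a ≠ S.r) :
    (S.rnk a : ℕ∞) < mbar (cls (S.parent a)) (cls a) := by
  rw [← sib_encard]
  exact rk_lt_encard S.hι (S.mem_sib ha)

lemma rnk_le_Mb {a : A} (ha : a ≠ S.r) (h : mbar (cls (S.parent a)) (cls a) ≠ ⊤) :
    S.rnk a + 2 ≤ S.Mb + 2 := by
  have h1 := lt_of_lt_of_le (S.rnk_lt ha) (S.mbar_le_Mb h)
  have : S.rnk a < S.Mb := by exact_mod_cast h1
  omega

noncomputable def code (a : A) : List S.Sig :=
  if mbar (cls (S.parent a)) (cls a) = ⊤ then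
    List.replicate (S.rnk a) (S.ltr (cls a) 1) ++ [S.ltr (cls a) 0]
  else [S.ltr (cls a) (S.rnk a + 2)]

lemma code_ne_nil (a : A) : S.code a ≠ [] := by
  rw [code]; split <;> simp

noncomputable def enc (S : Setup A) (a : A) : List S.Sig :=
  if h : a = S.r then [] else
    have : S.dep (S.parent a) < S.dep a := S.dep_parent_lt h
    enc S (S.parent a) ++ S.code a
termination_by S.dep a

lemma enc_root : S.enc S.r = [] := by rw [enc]; simp

lemma enc_of_ne {a : A} (ha : a ≠ S.r) : S.enc a = S.enc (S.parent a) ++ S.code a := by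
  conv_lhs => rw [enc]
  simp [ha]

lemma enc_eq_nil_iff {a : A} : S.enc a = [] ↔ a = S.r := by
  constructor
  · intro h
    by_contra ha
    rw [S.enc_of_ne ha] at h
    exact S.code_ne_nil a (by simpa using (List.append_eq_nil_iff.1 h).2)
  · rintro rfl; exact S.enc_root

lemma enc_last {a : A} {w : List S.Sig} {x : S.Sig} (h : S.enc a = w ++ [x]) :
    (x.2 : Fin (S.Mb + 3)).val ≠ 1 := by
  rcases eq_or_ne a S.r with rfl | ha
  · rw [enc_root] at h
    exact absurd h.symm (by simp)
  · rw [S.enc_of_ne ha, code] at h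
    split at h
    · rw [← List.append_assoc] at h
      have h1 : some (S.ltr (cls a) 0) = some x := by
        rw [← List.getLast?_concat (l := S.enc (S.parent a) ++ List.replicate (S.rnk a) (S.ltr (cls a) 1)), h, List.getLast?_concat]
      have h2 : x = S.ltr (cls a) 0 := by injection h1.symm
      rw [h2, S.ltr_snd _ (by omega)]
      omega
    · next hfin =>
      have h1 : some (S.ltr (cls a) (S.rnk a + 2)) = some x := by
        rw [← List.getLast?_concat (l := S.enc (S.parent a)), h, List.getLast?_concat]
      have h2 : x = S.ltr (cls a) (S.rnk a + 2) := by injection h1.symm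
      rw [h2, S.ltr_snd _ (S.rnk_le_Mb ha hfin)]
      omega

lemma no_cont_tail {a : A} {w : List S.Sig} {k : ℕ} {q : TQ A} (hk : k ≠ 0) :
    S.enc a ≠ w ++ List.replicate k (S.ltr q 1) := by
  intro h
  obtain ⟨m, rfl⟩ : ∃ m, k = m + 1 := ⟨k - 1, by omega⟩
  rw [List.replicate_succ', ← List.append_assoc] at h
  have := S.enc_last h
  rw [S.ltr_snd _ (by omega)] at this
  exact this rfl

lemma prefix_code {a : A} {t : List S.Sig} (h : t <+: S.code a) :
    t = S.code a ∨ t = List.replicate t.length (S.ltr (cls a) 1) := by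
  have ht : t = (S.code a).take t.length := List.prefix_iff_eq_take.1 h
  have hlen := h.length_le
  by_cases hT : mbar (cls (S.parent a)) (cls a) = ⊤
  · rw [code, if_pos hT] at ht hlen ⊢
    simp only [List.length_append, List.length_replicate, List.length_singleton] at hlen
    rcases Nat.lt_or_ge t.length (S.rnk a + 1) with hl | hl
    · right
      have h2 : t.length ≤ S.rnk a := by omega
      rw [ht, List.take_append, List.take_replicate]
      simp [Nat.min_eq_left h2, Nat.sub_eq_zero_of_le, h2]
    · left
      rw [ht, List.take_of_length_le (by simp; omega)]
  · rw [code, if_neg hT] at ht hlen ⊢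
    simp only [List.length_singleton] at hlen
    cases t with
    | nil => right; simp
    | cons x xs =>
      have hx : xs = [] := by
        simp only [List.length_cons] at hlen
        exact List.length_eq_zero_iff.1 (by omega)
      subst hx
      left
      simpa using ht

lemma code_getLast {a : A} (ha : a ≠ S.r) :
    ∃ j ≤ S.Mb + 2, (S.code a).getLast? = some (S.ltr (cls a) j) := by
  rw [code]
  split
  · exact ⟨0, by omega, List.getLast?_concat⟩
  · next hT => exact ⟨S.rnk a + 2, S.rnk_le_Mb ha hT, rfl⟩

lemma cls_eq_of_code_eq {a b : A} (ha : a ≠ S.r) (hb : b ≠ S.r)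
    (h : S.code a = S.code b) : cls a = cls b := by
  obtain ⟨j, hj, hla⟩ := S.code_getLast ha
  obtain ⟨j', hj', hlb⟩ := S.code_getLast hb
  rw [h, hlb] at hla
  have := S.ltr_inj hj' hj (by injection hla)
  exact this.1.symm

lemma code_length_top {a : A} (hT : mbar (cls (S.parent a)) (cls a) = ⊤) :
    (S.code a).length = S.rnk a + 1 := by
  rw [code, if_pos hT]; simp

lemma code_inj {a b : A} (ha : a ≠ S.r) (hb : b ≠ S.r) (hp : S.parent a = S.parent b)
    (h : S.code a = S.code b) : a = b := by
  have hq : cls a = cls b := S.cls_eq_of_code_eq ha hb h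
  have hsib : S.sib a = S.sib b := by rw [sib, sib, hp, hq]
  have hrnk : S.rnk a = S.rnk b := by
    by_cases hT : mbar (cls (S.parent a)) (cls a) = ⊤
    · have hT' : mbar (cls (S.parent b)) (cls b) = ⊤ := by rw [← hp, ← hq]; exact hT
      have h1 := S.code_length_top hT
      have h2 := S.code_length_top hT'
      rw [h, h2] at h1
      omega
    · have hT' : ¬ mbar (cls (S.parent b)) (cls b) = ⊤ := by rw [← hp, ← hq]; exact hT
      rw [code, if_neg hT, code, if_neg hT'] at h
      have h1 : S.ltr (cls a) (S.rnk a + 2) = S.ltr (cls b) (S.rnk b + 2) := by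
        injection h
      have := S.ltr_inj (S.rnk_le_Mb ha hT) (S.rnk_le_Mb hb hT') h1
      omega
  refine rk_inj S.hι (S.mem_sib ha) (hsib ▸ S.mem_sib hb) ?_
  show S.rnk a = rk S.ι (S.sib a) b
  rw [hsib]
  exact hrnk

lemma dep_pos (a : A) : 0 < S.dep a := Finset.card_pos.2 ⟨a, by simp [dep]⟩

lemma enc_prefix_of_le {a b : A} (h : a ≤ b) : S.enc a <+: S.enc b := by
  suffices H : ∀ n b a, S.dep b ≤ n → a ≤ b → S.enc a <+: S.enc b from
    H (S.dep b) b a le_rfl h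
  intro n
  induction n with
  | zero => intro b a hd _; exact absurd hd (by have := S.dep_pos b; omega)
  | succ n ih =>
    intro b a hd hab
    rcases eq_or_ne b S.r with rfl | hb
    · have : a = S.r := le_antisymm hab (S.hr a)
      subst this
      exact List.prefix_refl _
    · rcases S.le_iff_le_parent hb hab with rfl | hle
      · exact List.prefix_refl _
      · have h1 := ih (S.parent b) a (by have := S.dep_parent_lt hb; omega) hle
        rw [S.enc_of_ne hb]
        exact h1.trans (List.prefix_append _ _)

lemma enc_inj {a b : A} (h : S.enc a = S.enc b) : a = b := by
  suffices H : ∀ n a b, S.dep a + S.dep b ≤ n → S.enc a = S.enc b → a = b from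
    H (S.dep a + S.dep b) a b le_rfl h
  intro n
  induction n with
  | zero => intro a b hd _; exact absurd hd (by have := S.dep_pos a; omega)
  | succ n ih =>
    intro a b hd h
    rcases eq_or_ne a S.r with rfl | ha
    · rw [S.enc_root] at h
      exact (S.enc_eq_nil_iff.1 h.symm).symm
    rcases eq_or_ne b S.r with rfl | hb
    · rw [S.enc_root] at h
      exact S.enc_eq_nil_iff.1 h
    have key : ∀ a b : A, a ≠ S.r → b ≠ S.r → S.dep a + S.dep b ≤ n + 1 →
        S.enc a = S.enc b →
        (S.enc (S.parent a)).length ≤ (S.enc (S.parent b)).length → a = b := by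
      intro a b ha hb hd h hlen
      rw [S.enc_of_ne ha, S.enc_of_ne hb] at h
      have hpa : S.enc (S.parent a) <+: S.enc (S.parent b) ++ S.code b := by
        rw [← h]; exact List.prefix_append _ _
      have hpre : S.enc (S.parent a) <+: S.enc (S.parent b) :=
        List.prefix_of_prefix_length_le hpa (List.prefix_append _ _) hlen
      obtain ⟨s, hs⟩ := hpre
      rcases eq_or_ne s [] with rfl | hsne
      · rw [List.append_nil] at hs
        have hpp : S.parent a = S.parent b := by
          apply ih
          · have h1 := S.dep_parent_lt ha
            have h2 := S.dep_parent_lt hb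
            omega
          · rw [hs]
        have hcode : S.code a = S.code b := by
          rw [hs] at h
          exact List.append_cancel_left h
        exact S.code_inj ha hb hpp hcode
      · exfalso
        have hsc : s ++ S.code b = S.code a := by
          rw [← hs, List.append_assoc] at h
          exact (List.append_cancel_left h).symm
        have hspre : s <+: S.code a := ⟨S.code b, hsc⟩
        rcases S.prefix_code hspre with heq | hrep
        · have := congrArg List.length hsc
          rw [heq] at this
          simp only [List.length_append] at this
          have := S.code_ne_nil b
          have hlb : 0 < (S.code b).length := List.length_pos_iff.2 (S.code_ne_nil b)
          omega
        · apply S.no_cont_tail (a := S.parent b) (w := S.enc (S.parent a))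
            (k := s.length) (q := cls a) (by simpa using hsne)
          rw [← hrep, hs]
    rcases le_total (S.enc (S.parent a)).length (S.enc (S.parent b)).length with hl | hl
    · exact key a b ha hb hd h hl
    · exact (key b a hb ha (by omega) h.symm hl).symm

lemma le_of_enc_prefix {a b : A} (h : S.enc a <+: S.enc b) : a ≤ b := by
  suffices H : ∀ n b a, S.dep b ≤ n → S.enc a <+: S.enc b → a ≤ b from
    H (S.dep b) b a le_rfl h
  intro n
  induction n with
  | zero => intro b a hd _; exact absurd hd (by have := S.dep_pos b; omega)
  | succ n ih =>
    intro b a hd h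
    rcases eq_or_ne b S.r with rfl | hb
    · rw [S.enc_root, List.prefix_nil] at h
      rw [S.enc_eq_nil_iff.1 h]
    rcases eq_or_ne a S.r with rfl | ha
    · exact S.hr b
    have hb' : S.enc b = S.enc (S.parent b) ++ S.code b := S.enc_of_ne hb
    have hpb : S.enc (S.parent b) <+: S.enc b := by
      rw [hb']; exact List.prefix_append _ _
    rcases le_or_gt (S.enc a).length (S.enc (S.parent b)).length with hl | hl
    · have hpre : S.enc a <+: S.enc (S.parent b) :=
        List.prefix_of_prefix_length_le h hpb hl
      have := ih (S.parent b) a (by have := S.dep_parent_lt hb; omega) hpre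
      exact this.trans S.parent_le
    · have hpre2 : S.enc (S.parent b) <+: S.enc a :=
        List.prefix_of_prefix_length_le hpb h hl.le
      obtain ⟨t, ht⟩ := hpre2
      have htpre : t <+: S.code b := by
        rw [hb', ← ht] at h
        exact (List.prefix_append_right_inj _).1 h
      rcases S.prefix_code htpre with heq | hrep
      · have : S.enc a = S.enc b := by rw [← ht, heq, ← hb']
        exact le_of_eq (S.enc_inj this)
      · exfalso
        have htne : t ≠ [] := by
          intro hh
          rw [hh, List.append_nil] at ht
          rw [ht] at hl
          exact lt_irrefl _ hl
        apply S.no_cont_tail (a := a) (w := S.enc (S.parent b))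
          (k := t.length) (q := cls b) (by simpa using htne)
        rw [← hrep, ht]

lemma le_iff_prefix {a b : A} : a ≤ b ↔ S.enc a <+: S.enc b :=
  ⟨S.enc_prefix_of_le, S.le_of_enc_prefix⟩

lemma exists_child {a : A} {q : TQ A} {i : ℕ} (hi : (i : ℕ∞) < mbar (cls a) q) :
    ∃ c, c ≠ S.r ∧ S.parent c = a ∧ cls c = q ∧ S.rnk c = i := by
  rw [mbar_cls] at hi
  obtain ⟨c, hc, hrk⟩ := rk_surj S.hι hi
  obtain ⟨hcov, hcls⟩ := hc
  obtain ⟨hpar, hner⟩ := S.parent_eq_of_covBy hcov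
  refine ⟨c, hner, hpar, hcls, ?_⟩
  rw [rnk, sib, hpar, hcls]
  exact hrk

lemma ltr_eta (x : S.Sig) : S.ltr x.1 (x.2 : Fin (S.Mb + 3)).val = x := by
  have h2 : (x.2 : Fin (S.Mb + 3)).val ≤ S.Mb + 2 := by
    have := (x.2 : Fin (S.Mb + 3)).isLt
    omega
  show (x.1, _) = x
  rw [show ((⟨min (x.2 : Fin (S.Mb + 3)).val (S.Mb + 2), by omega⟩ : Fin (S.Mb + 3))) = x.2 by
    apply Fin.ext; simp [Nat.min_eq_left h2]]
  rfl

lemma eq_ltr_of_val {x : S.Sig} {j : ℕ} (h : (x.2 : Fin (S.Mb + 3)).val = j) :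
    x = S.ltr x.1 j := by
  rw [← h]
  exact (S.ltr_eta x).symm

noncomputable def dfaStep (S : Setup A) :
    Option (TQ A ⊕ TQ A) → S.Sig → Option (TQ A ⊕ TQ A)
  | none, _ => none
  | some (Sum.inl p), x =>
      if (x.2 : Fin (S.Mb + 3)).val = 0 then
        (if mbar p x.1 = ⊤ then some (Sum.inl x.1) else none)
      else if (x.2 : Fin (S.Mb + 3)).val = 1 then
        (if mbar p x.1 = ⊤ then some (Sum.inr x.1) else none)
      else if (((x.2 : Fin (S.Mb + 3)).val - 2 : ℕ) : ℕ∞) < mbar p x.1 ∧ mbar p x.1 ≠ ⊤ then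
        some (Sum.inl x.1)
      else none
  | some (Sum.inr q'), x =>
      if x.1 = q' ∧ (x.2 : Fin (S.Mb + 3)).val = 1 then some (Sum.inr q')
      else if x.1 = q' ∧ (x.2 : Fin (S.Mb + 3)).val = 0 then some (Sum.inl q') else none

noncomputable def dfa (S : Setup A) : DFA S.Sig (Option (TQ A ⊕ TQ A)) where
  step := S.dfaStep
  start := some (Sum.inl (cls S.r))
  accept := {s | ∃ q, s = some (Sum.inl q)}

lemma evalFrom_reading (q : TQ A) (k : ℕ) :
    S.dfa.evalFrom (some (Sum.inr q)) (List.replicate k (S.ltr q 1) ++ [S.ltr q 0]) =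
      some (Sum.inl q) := by
  induction k with
  | zero =>
    show S.dfaStep (some (Sum.inr q)) (S.ltr q 0) = _
    rw [dfaStep]
    simp [ltr_fst, S.ltr_snd q (by omega : (0:ℕ) ≤ S.Mb + 2)]
  | succ k ih =>
    rw [List.replicate_succ, List.cons_append]
    show S.dfa.evalFrom (S.dfaStep (some (Sum.inr q)) (S.ltr q 1)) _ = _
    have hstep : S.dfaStep (some (Sum.inr q)) (S.ltr q 1) = some (Sum.inr q) := by
      rw [dfaStep]
      simp [ltr_fst, S.ltr_snd q (by omega : (1:ℕ) ≤ S.Mb + 2)]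
    rw [hstep]
    exact ih

lemma evalFrom_code {a : A} (ha : a ≠ S.r) :
    S.dfa.evalFrom (some (Sum.inl (cls (S.parent a)))) (S.code a) = some (Sum.inl (cls a)) := by
  rw [code]
  by_cases hT : mbar (cls (S.parent a)) (cls a) = ⊤
  · rw [if_pos hT]
    cases hrnk : S.rnk a with
    | zero =>
      show S.dfaStep (some (Sum.inl (cls (S.parent a)))) (S.ltr (cls a) 0) = _
      rw [dfaStep]
      simp [ltr_fst, S.ltr_snd _ (by omega : (0:ℕ) ≤ S.Mb + 2), hT]
    | succ k =>
      rw [List.replicate_succ, List.cons_append]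
      show S.dfa.evalFrom (S.dfaStep (some (Sum.inl (cls (S.parent a)))) (S.ltr (cls a) 1)) _ = _
      have hstep : S.dfaStep (some (Sum.inl (cls (S.parent a)))) (S.ltr (cls a) 1) =
          some (Sum.inr (cls a)) := by
        rw [dfaStep]
        simp [ltr_fst, S.ltr_snd _ (by omega : (1:ℕ) ≤ S.Mb + 2), hT]
      rw [hstep]
      exact S.evalFrom_reading (cls a) k
  · rw [if_neg hT]
    show S.dfaStep (some (Sum.inl (cls (S.parent a)))) (S.ltr (cls a) (S.rnk a + 2)) = _
    have hb := S.rnk_le_Mb ha hT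
    rw [dfaStep]
    simp only [ltr_fst, S.ltr_snd _ hb]
    rw [if_neg (by omega), if_neg (by omega), if_pos]
    refine ⟨?_, hT⟩
    simpa using S.rnk_lt ha

lemma eval_enc (a : A) : S.dfa.eval (S.enc a) = some (Sum.inl (cls a)) := by
  suffices H : ∀ n a, S.dep a ≤ n → S.dfa.eval (S.enc a) = some (Sum.inl (cls a)) from
    H (S.dep a) a le_rfl
  intro n
  induction n with
  | zero => intro a hd; exact absurd hd (by have := S.dep_pos a; omega)
  | succ n ih =>
    intro a hd
    rcases eq_or_ne a S.r with rfl | ha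
    · rw [S.enc_root]; rfl
    · rw [S.enc_of_ne ha, DFA.eval, DFA.evalFrom_of_append]
      have h1 := ih (S.parent a) (by have := S.dep_parent_lt ha; omega)
      rw [DFA.eval] at h1
      rw [h1]
      exact S.evalFrom_code ha

lemma run_inv (w : List S.Sig) :
    (∀ q, S.dfa.eval w = some (Sum.inl q) → ∃ a, S.enc a = w ∧ cls a = q) ∧
    (∀ q, S.dfa.eval w = some (Sum.inr q) →
      ∃ a k, w = S.enc a ++ List.replicate (k + 1) (S.ltr q 1) ∧ mbar (cls a) q = ⊤) := by
  induction w using List.reverseRecOn with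
  | nil =>
    constructor
    · intro q hq
      refine ⟨S.r, S.enc_root, ?_⟩
      have : some (Sum.inl (cls S.r) : TQ A ⊕ TQ A) = some (Sum.inl q) := hq
      simpa using this
    · intro q hq
      have : some (Sum.inl (cls S.r) : TQ A ⊕ TQ A) = some (Sum.inr q) := hq
      simp at this
  | append_singleton w x ih =>
    have hx : S.dfa.eval (w ++ [x]) = S.dfaStep (S.dfa.eval w) x :=
      DFA.eval_append_singleton _ _ _
    rcases hev : S.dfa.eval w with _ | p | q'
    · rw [hev] at hx
      rw [dfaStep] at hx
      constructor <;> intro q hq <;> rw [hx] at hq <;> simp at hq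
    all_goals rw [hev] at hx
    · -- state some (inl p)
      obtain ⟨a, hae, hacls⟩ := ih.1 p hev
      rw [dfaStep] at hx
      constructor
      · intro q hq
        rw [hx] at hq
        split_ifs at hq with h1 h2 h3 h4 h5
        all_goals try exact Option.noConfusion hq
        all_goals try (simp at hq; done)
        · -- x.2.val = 0, mbar p x.1 = ⊤ : new child of rank 0
          have hq' : x.1 = q := by simpa using hq
          have hT' : mbar (cls a) x.1 = ⊤ := by rw [hacls]; exact h2
          have hi : ((0 : ℕ) : ℕ∞) < mbar (cls a) x.1 := by rw [hT']; simp
          obtain ⟨c, hcr, hcp, hccls, hcrnk⟩ := S.exists_child hi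
          refine ⟨c, ?_, hq' ▸ hccls⟩
          have hcode : S.code c = [S.ltr x.1 0] := by
            rw [code, hcp, hccls, if_pos hT', hcrnk]
            simp
          rw [S.enc_of_ne hcr, hcp, hae, hcode, ← S.eq_ltr_of_val h1]
        · -- x.2.val ≥ 2 branch
          have hq' : x.1 = q := by simpa using hq
          obtain ⟨h5a, h5b⟩ := h5
          have hT' : mbar (cls a) x.1 ≠ ⊤ := by rw [hacls]; exact h5b
          have hi : (((x.2 : Fin (S.Mb + 3)).val - 2 : ℕ) : ℕ∞) < mbar (cls a) x.1 := by
            rw [hacls]; exact h5a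
          obtain ⟨c, hcr, hcp, hccls, hcrnk⟩ := S.exists_child hi
          refine ⟨c, ?_, hq' ▸ hccls⟩
          have hcode : S.code c = [S.ltr x.1 (S.rnk c + 2)] := by
            rw [code, hcp, hccls, if_neg hT']
          have hx' : x = S.ltr x.1 (S.rnk c + 2) := by
            rw [hcrnk, show (x.2 : Fin (S.Mb + 3)).val - 2 + 2 = (x.2 : Fin (S.Mb + 3)).val by
              omega]
            exact (S.ltr_eta x).symm
          rw [S.enc_of_ne hcr, hcp, hae, hcode, ← hx']
      · intro q hq
        rw [hx] at hq
        split_ifs at hq with h1 h2 h3 h4 h5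
        all_goals try exact Option.noConfusion hq
        all_goals try (simp at hq; done)
        · -- x.2.val = 1, ⊤ : start reading
          have hq' : x.1 = q := by simpa using hq
          refine ⟨a, 0, ?_, by rw [hacls, ← hq']; exact h4⟩
          rw [hae, zero_add, List.replicate_one, ← hq', ← S.eq_ltr_of_val h3]
    · -- state some (inr q')
      obtain ⟨a, k, hwa, hT⟩ := ih.2 q' hev
      rw [dfaStep] at hx
      constructor
      · intro q hq
        rw [hx] at hq
        split_ifs at hq with h1 h2
        all_goals try exact Option.noConfusion hq
        all_goals try (simp at hq; done)
        · -- terminator: child of rank k+1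
          obtain ⟨h2a, h2b⟩ := h2
          have hq' : q' = q := by simpa using hq
          have hi : ((k + 1 : ℕ) : ℕ∞) < mbar (cls a) q' := by
            rw [hT]; exact ENat.coe_lt_top _
          obtain ⟨c, hcr, hcp, hccls, hcrnk⟩ := S.exists_child hi
          refine ⟨c, ?_, hq' ▸ hccls⟩
          have hcode : S.code c = List.replicate (k + 1) (S.ltr q' 1) ++ [S.ltr q' 0] := by
            rw [code, hcp, hccls, if_pos hT, hcrnk]
          have hx' : x = S.ltr q' 0 := by rw [← h2a]; exact S.eq_ltr_of_val h2b
          rw [S.enc_of_ne hcr, hcp, hcode, hwa, ← List.append_assoc, ← hx']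
      · intro q hq
        rw [hx] at hq
        split_ifs at hq with h1 h2
        all_goals try exact Option.noConfusion hq
        all_goals try (simp at hq; done)
        · obtain ⟨h1a, h1b⟩ := h1
          have hq' : q' = q := by simpa using hq
          refine ⟨a, k + 1, ?_, hq' ▸ hT⟩
          have hx' : x = S.ltr q 1 := by rw [← hq', ← h1a]; exact S.eq_ltr_of_val h1b
          rw [hwa, hq', List.replicate_succ' (n := k + 1), ← List.append_assoc, hx']

lemma accepts_dfa : S.dfa.accepts = {w | ∃ a, S.enc a = w} := by
  ext w
  rw [DFA.mem_accepts]
  constructor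
  · rintro ⟨q, hq⟩
    obtain ⟨a, ha, _⟩ := (S.run_inv w).1 q hq
    exact ⟨a, ha⟩
  · rintro ⟨a, rfl⟩
    exact ⟨cls a, S.eval_enc a⟩

end Setup

lemma finite_TQ {A : Type*} [PartialOrder A] (T : Finset A)
    (hT : ∀ a : A, ∃ t ∈ T, Nonempty ({b : A // a ≤ b} ≃o {b : A // t ≤ b})) :
    Finite (TQ A) := by
  have hsurj : Function.Surjective (fun t : {x // x ∈ T} => cls (t : A)) := by
    intro q
    induction q using Quotient.ind with
    | _ a =>
      obtain ⟨t, htT, ⟨iso⟩⟩ := hT a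
      exact ⟨⟨t, htT⟩, (cls_eq_of_iso iso).symm⟩
  exact Finite.of_surjective _ hsurj

end RTree

/-- Every countable tree (a countable partial order with a least element in which
every down-set `{b | b ≤ a}` is a finite chain) having only finitely many
subtrees up to isomorphism is isomorphic to the prefix order on a regular
language `L` over a finite alphabet with `ε ∈ L`. -/
theorem regular_tree_iso_prefix_order_of_regular_language
    {A : Type*} [PartialOrder A] [Countable A]
    (hroot : ∃ r : A, ∀ a : A, r ≤ a)
    (hfin : ∀ a : A, (Set.Iic a).Finite)
    (hchain : ∀ a : A, IsChain (· ≤ ·) (Set.Iic a))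
    (hsub : ∃ T : Finset A, ∀ a : A, ∃ t ∈ T,
      Nonempty ({b : A // a ≤ b} ≃o {b : A // t ≤ b})) :
    ∃ (n : ℕ) (L : Language (Fin n)), L.IsRegular ∧ ([] : List (Fin n)) ∈ L ∧
      ∃ e : A ≃ {l : List (Fin n) // l ∈ L},
        ∀ a b : A, a ≤ b ↔ (e a).1 <+: (e b).1 := by
  obtain ⟨r, hr⟩ := hroot
  obtain ⟨ι, hι⟩ := Countable.exists_injective_nat A
  have hQ : Finite (RTree.TQ A) := by
    obtain ⟨T, hT⟩ := hsub
    exact RTree.finite_TQ T hT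
  haveI := hQ
  set S : RTree.Setup A := ⟨hfin, hchain, r, hr, ι, hι, hQ⟩ with hS
  have hsig : Finite S.Sig := inferInstanceAs (Finite (RTree.TQ A × Fin (S.Mb + 3)))
  obtain ⟨n, ⟨ε⟩⟩ := Finite.exists_equiv_fin S.Sig
  haveI : Fintype (RTree.TQ A) := Fintype.ofFinite _
  obtain ⟨m, ⟨σe⟩⟩ := Finite.exists_equiv_fin (Option (RTree.TQ A ⊕ RTree.TQ A))
  set L : Language (Fin n) := {w | ∃ a, (S.enc a).map ε = w} with hL
  refine ⟨n, L, ?_, ?_, ?_⟩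
  · -- regular
    refine ⟨Fin m, inferInstance, DFA.reindex σe (S.dfa.comap (fun x : Fin n => ε.symm x)), ?_⟩
    rw [DFA.accepts_reindex, DFA.accepts_comap, S.accepts_dfa]
    ext w
    simp only [Set.mem_preimage, Set.mem_setOf_eq, hL]
    constructor
    · rintro ⟨a, ha⟩
      refine ⟨a, ?_⟩
      rw [ha]
      simp [List.map_map]
    · rintro ⟨a, rfl⟩
      refine ⟨a, ?_⟩
      simp [List.map_map]
  · exact ⟨S.r, by rw [S.enc_root]; rfl⟩
  · have hbij : Function.Bijective (fun a : A => (⟨(S.enc a).map ε, ⟨a, rfl⟩⟩ :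
        {l : List (Fin n) // l ∈ L})) := by
      constructor
      · intro a b hab
        have h1 : (S.enc a).map ε = (S.enc b).map ε := congrArg Subtype.val hab
        have h2 : S.enc a = S.enc b := by
          have := congrArg (List.map ε.symm) h1
          simpa [List.map_map] using this
        exact S.enc_inj h2
      · rintro ⟨l, a, ha⟩
        exact ⟨a, Subtype.ext ha⟩
    refine ⟨Equiv.ofBijective _ hbij, fun a b => ?_⟩
    rw [S.le_iff_prefix]
    show S.enc a <+: S.enc b ↔ (S.enc a).map ε <+: (S.enc b).map ε
    constructor
    · exact fun h => h.map ε
    · intro h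
      have := h.map ε.symm
      simpa [List.map_map] using this
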